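/- Let φ : (G,g) → T be a hyperelliptic morphism with G connected, and let C′_φ = { x′ ∈ X(G) : d_φ(x′) = 2 } be the dilation subgraph in G. Then for every vertex v′ ∈ V(G): if d_φ(v′) = 1 then Ram_φ(v′) = 0, and if d_φ(v′) = 2 then Ram_φ(v′) = 2g(v′) + 2 − val_{C′_φ}(v′), where val_{C′_φ}(v′) is the valency of v′ in the subgraph C′_φ. If moreover G and T have no legs, then Σ_{v′∈V(G)} Ram_φ(v′) = 2·genus(G) + 2. -/
import Mathlib


namespace TropDR

open Finset

/-- `Finset.filter` with classical decidability. -/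
noncomputable def cfilter {α : Type*} (p : α → Prop) (s : Finset α) : Finset α :=
  @Finset.filter α p (Classical.decPred p) s

/-- A graph with legs: a finite set `X` together with an idempotent root map `rt`
and an involution `inv` fixing every root vertex. -/
structure PGraph where
  X : Type
  [fintypeX : Fintype X]
  [decEqX : DecidableEq X]
  rt : X → X
  inv : X → X
  rt_idem : ∀ x, rt (rt x) = rt x
  inv_invol : ∀ x, inv (inv x) = x
  inv_fix_rt : ∀ x, inv (rt x) = rt x

attribute [instance] PGraph.fintypeX PGraph.decEqX

namespace PGraph

variable (G : PGraph)

/-- Vertices are the fixed points (= the image) of the root map. -/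
def IsVertex (x : G.X) : Prop := G.rt x = x

/-- Half-edges are the non-vertices. -/
def IsHalf (x : G.X) : Prop := G.rt x ≠ x

/-- Legs are the `inv`-fixed half-edges. -/
def IsLeg (x : G.X) : Prop := G.IsHalf x ∧ G.inv x = x

/-- Halves of genuine edges: half-edges moved by the involution. -/
def IsEdgeHalf (x : G.X) : Prop := G.IsHalf x ∧ G.inv x ≠ x

noncomputable def vertexSet : Finset G.X := cfilter (fun x => G.IsVertex x) Finset.univ

noncomputable def legSet : Finset G.X := cfilter (fun x => G.IsLeg x) Finset.univ

noncomputable def edgeHalfSet : Finset G.X := cfilter (fun x => G.IsEdgeHalf x) Finset.univ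

/-- Tangent directions at a vertex `v`: half-edges rooted at `v`. -/
noncomputable def tangents (v : G.X) : Finset G.X :=
  cfilter (fun h => G.IsHalf h ∧ G.rt h = v) Finset.univ

noncomputable def valence (v : G.X) : ℕ := (G.tangents v).card

/-- The number of edges: half the number of edge half-edges. -/
noncomputable def numEdges : ℕ := G.edgeHalfSet.card / 2

noncomputable def numLegs : ℕ := G.legSet.card

noncomputable def numVertices : ℕ := G.vertexSet.card

/-- Connectedness: the equivalence relation generated by `x ∼ rt x` and `x ∼ inv x`
has a single class (and `X` is nonempty). -/
def Connected : Prop :=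
  Nonempty G.X ∧ ∀ x y : G.X, Relation.EqvGen (fun a b => G.rt a = b ∨ G.inv a = b) x y

/-- A subgraph: a subset of `X` closed under the root map and the involution. -/
def IsSubgraph (F : Finset G.X) : Prop :=
  (∀ x ∈ F, G.rt x ∈ F) ∧ (∀ x ∈ F, G.inv x ∈ F)

/-- Valency of `v` inside a subgraph `F`. -/
noncomputable def valIn (F : Finset G.X) (v : G.X) : ℕ := (G.tangents v ∩ F).card

end PGraph

/-- A morphism of graphs: commutes with the root maps and involutions,
and maps no edge into a leg. -/
structure GraphHom (G' G : PGraph) where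
  toFun : G'.X → G.X
  map_rt : ∀ x, toFun (G'.rt x) = G.rt (toFun x)
  map_inv : ∀ x, toFun (G'.inv x) = G.inv (toFun x)
  edge_not_leg : ∀ h, G'.IsEdgeHalf h → ¬ G.IsLeg (toFun h)

/-- A harmonic morphism of graphs: a graph morphism together with a degree function. -/
structure HarmonicHom (G' G : PGraph) extends GraphHom G' G where
  deg : G'.X → ℕ
  deg_edge : ∀ h, G'.IsEdgeHalf h → deg (G'.inv h) = deg h
  deg_zero_iff : ∀ h, G'.IsHalf h → (deg h = 0 ↔ G.IsVertex (toFun h))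
  harmonic : ∀ v', G'.IsVertex v' → ∀ h, G.IsHalf h → G.rt h = toFun v' →
    deg v' = ∑ h' ∈ cfilter (fun h' => toFun h' = h) (G'.tangents v'), deg h'

namespace HarmonicHom

variable {G' G : PGraph} (φ : HarmonicHom G' G)

/-- A harmonic morphism is finite if it has positive degree on every half-edge. -/
def Finite : Prop := ∀ h, G'.IsHalf h → 0 < φ.deg h

/-- The sum of the degrees over the vertex fiber of `v`. -/
noncomputable def vertexFiberDeg (v : G.X) : ℕ :=
  ∑ v' ∈ cfilter (fun v' => φ.toFun v' = v) G'.vertexSet, φ.deg v'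

end HarmonicHom

/-- A weighted graph: a graph together with a genus function on (all elements;
only the values at vertices are relevant). -/
structure WGraph extends PGraph where
  gw : X → ℕ

namespace WGraph

variable (G : WGraph)

/-- The genus of a (connected) weighted graph. -/
noncomputable def genus : ℤ :=
  (G.toPGraph.numEdges : ℤ) - (G.toPGraph.numVertices : ℤ) + 1 +
    ∑ v ∈ G.toPGraph.vertexSet, (G.gw v : ℤ)

/-- The Euler characteristic of a vertex. -/
noncomputable def chiV (v : G.X) : ℤ :=
  2 - 2 * (G.gw v : ℤ) - (G.toPGraph.valence v : ℤ)

/-- The Euler characteristic of a (connected) weighted graph. -/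
noncomputable def chi : ℤ := 2 - 2 * G.genus - (G.toPGraph.numLegs : ℤ)

end WGraph

/-- The ramification degree of a (finite) harmonic morphism of weighted graphs at `v'`. -/
noncomputable def ram {G' G : WGraph} (φ : HarmonicHom G'.toPGraph G.toPGraph) (v' : G'.X) : ℤ :=
  (φ.deg v' : ℤ) * G.chiV (φ.toFun v') - G'.chiV v'

def Unramified {G' G : WGraph} (φ : HarmonicHom G'.toPGraph G.toPGraph) : Prop :=
  ∀ v', G'.toPGraph.IsVertex v' → ram φ v' = 0

def Effective {G' G : WGraph} (φ : HarmonicHom G'.toPGraph G.toPGraph) : Prop :=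
  ∀ v', G'.toPGraph.IsVertex v' → 0 ≤ ram φ v'

/-- A tree: a connected weighted graph of genus zero. -/
def IsTree (T : WGraph) : Prop := T.toPGraph.Connected ∧ T.genus = 0

/-- A hyperelliptic morphism: a finite harmonic morphism of degree two onto a tree, such
that `d_φ(v) = 2` at every vertex of positive weight. -/
def IsHyperelliptic {G T : WGraph} (φ : HarmonicHom G.toPGraph T.toPGraph) : Prop :=
  φ.Finite ∧ IsTree T ∧ (∀ v, T.toPGraph.IsVertex v → φ.vertexFiberDeg v = 2) ∧
    (∀ v, G.toPGraph.IsVertex v → 0 < G.gw v → φ.deg v = 2)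


section Helpers

variable {α : Type*}

lemma mem_cfilter {p : α → Prop} {s : Finset α} {x : α} :
    x ∈ cfilter p s ↔ x ∈ s ∧ p x := @Finset.mem_filter _ _ (Classical.decPred p) _ _

lemma cfilter_eq_filter (p : α → Prop) [DecidablePred p] (s : Finset α) :
    cfilter p s = s.filter p := by
  ext x; rw [mem_cfilter, Finset.mem_filter]

lemma mem_vertexSet {G : PGraph} {x : G.X} : x ∈ G.vertexSet ↔ G.IsVertex x := by
  rw [PGraph.vertexSet, mem_cfilter]; simp

lemma mem_edgeHalfSet {G : PGraph} {x : G.X} : x ∈ G.edgeHalfSet ↔ G.IsEdgeHalf x := by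
  rw [PGraph.edgeHalfSet, mem_cfilter]; simp

lemma mem_legSet {G : PGraph} {x : G.X} : x ∈ G.legSet ↔ G.IsLeg x := by
  rw [PGraph.legSet, mem_cfilter]; simp

lemma mem_tangents {G : PGraph} {v x : G.X} :
    x ∈ G.tangents v ↔ G.IsHalf x ∧ G.rt x = v := by
  rw [PGraph.tangents, mem_cfilter]; simp

lemma edgeHalf_inv {G : PGraph} {x : G.X} (h : G.IsEdgeHalf x) : G.IsEdgeHalf (G.inv x) := by
  obtain ⟨h1, h2⟩ := h
  constructor
  · intro hri
    apply h2
    have hfix : G.inv (G.inv x) = G.inv x := by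
      calc G.inv (G.inv x) = G.inv (G.rt (G.inv x)) := by rw [hri]
        _ = G.rt (G.inv x) := G.inv_fix_rt _
        _ = G.inv x := hri
    rw [G.inv_invol] at hfix
    exact hfix.symm
  · rw [G.inv_invol]
    exact fun hh => h2 hh.symm

/-- An involution without fixed points on a finset yields an even cardinality. -/
lemma card_even_of_involution [DecidableEq α] :
    ∀ (n : ℕ) (s : Finset α) (f : α → α), s.card = n →
      (∀ x ∈ s, f x ∈ s) → (∀ x ∈ s, f (f x) = x) → (∀ x ∈ s, f x ≠ x) →
      ∃ k, s.card = 2 * k := by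
  intro n
  induction n using Nat.strong_induction_on with
  | _ n ih =>
    intro s f hn hmem hinv hne
    rcases s.eq_empty_or_nonempty with rfl | ⟨a, ha⟩
    · exact ⟨0, by simp⟩
    · have hfa : f a ∈ s := hmem a ha
      have hane : f a ≠ a := hne a ha
      have h2n : 2 ≤ n := by
        rw [← hn]
        exact Finset.one_lt_card.mpr ⟨a, ha, f a, hfa, fun e => hane e.symm⟩
      set s' := (s.erase a).erase (f a) with hs'
      have hsub : s' ⊆ s := (Finset.erase_subset _ _).trans (Finset.erase_subset _ _)
      have hcard : s'.card = n - 2 := by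
        rw [hs', Finset.card_erase_of_mem (Finset.mem_erase.mpr ⟨hane, hfa⟩),
          Finset.card_erase_of_mem ha, hn]
        omega
      have hmem' : ∀ x ∈ s', f x ∈ s' := by
        intro x hx
        have hxs : x ∈ s := hsub hx
        rw [hs', Finset.mem_erase, Finset.mem_erase] at hx ⊢
        refine ⟨?_, ?_, hmem x hxs⟩
        · intro h
          apply hx.2.1
          have := hinv x hxs
          rw [h, hinv a ha] at this
          exact this.symm
        · intro h
          apply hx.1
          have := hinv x hxs
          rw [h] at this
          exact this.symm
      obtain ⟨k, hk⟩ := ih (n - 2) (by omega) s' f hcard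
        hmem' (fun x hx => hinv x (hsub hx)) (fun x hx => hne x (hsub hx))
      exact ⟨k + 1, by omega⟩

lemma card_edgeHalf (G : PGraph) : G.edgeHalfSet.card = 2 * G.numEdges := by
  obtain ⟨k, hk⟩ := card_even_of_involution G.edgeHalfSet.card G.edgeHalfSet G.inv rfl
    (fun x hx => mem_edgeHalfSet.mpr (edgeHalf_inv (mem_edgeHalfSet.mp hx)))
    (fun x _ => G.inv_invol x)
    (fun x hx => (mem_edgeHalfSet.mp hx).2)
  unfold PGraph.numEdges
  omega

lemma sum_valence_eq (G : PGraph) :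
    ∑ v ∈ G.vertexSet, G.valence v = G.edgeHalfSet.card + G.legSet.card := by
  classical
  have h1 : (Finset.univ.filter (fun x => G.IsHalf x)).card
      = ∑ v ∈ G.vertexSet, ((Finset.univ.filter (fun x => G.IsHalf x)).filter
          (fun h => G.rt h = v)).card := by
    exact Finset.card_eq_sum_card_fiberwise (f := G.rt)
      (fun x _ => mem_vertexSet.mpr (G.rt_idem x))
  have h2 : ∀ v ∈ G.vertexSet,
      ((Finset.univ.filter (fun x => G.IsHalf x)).filter (fun h => G.rt h = v)).card
        = G.valence v := by
    intro v _
    unfold PGraph.valence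
    congr 1
    ext x
    rw [mem_tangents]
    simp only [Finset.mem_filter, Finset.mem_univ, true_and]
  have h3 : Finset.univ.filter (fun x => G.IsHalf x) = G.edgeHalfSet ∪ G.legSet := by
    ext x
    rw [Finset.mem_union, mem_edgeHalfSet, mem_legSet]
    simp only [Finset.mem_filter, Finset.mem_univ, true_and]
    unfold PGraph.IsEdgeHalf PGraph.IsLeg
    tauto
  have h4 : Disjoint G.edgeHalfSet G.legSet := by
    rw [Finset.disjoint_left]
    intro x hx hx'
    exact (mem_edgeHalfSet.mp hx).2 (mem_legSet.mp hx').2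
  rw [← Finset.sum_congr rfl h2, ← h1, h3, Finset.card_union_of_disjoint h4]

lemma exists_boundary (G : PGraph) (hG : G.Connected) (S : Finset G.X)
    (v : G.X) (hvS : v ∈ S) (hvV : G.IsVertex v)
    (w : G.X) (hwV : G.IsVertex w) (hwS : w ∉ S) :
    ∃ h, G.IsEdgeHalf h ∧ G.rt h ∉ S ∧ G.rt (G.inv h) ∈ S := by
  classical
  have key : ∀ x y : G.X, Relation.EqvGen (fun a b => G.rt a = b ∨ G.inv a = b) x y →
      ((G.rt x ∈ S ↔ G.rt y ∈ S) ∨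
        ∃ h, G.IsEdgeHalf h ∧ G.rt h ∉ S ∧ G.rt (G.inv h) ∈ S) := by
    intro x y hxy
    induction hxy with
    | rel a b hab =>
      rcases hab with hab | hab
      · left; rw [← hab, G.rt_idem]
      · subst hab
        by_cases hfix : G.inv a = a
        · left; rw [hfix]
        · have hhalf : G.IsHalf a := by
            intro hra
            apply hfix
            calc G.inv a = G.inv (G.rt a) := by rw [hra]
              _ = G.rt a := G.inv_fix_rt a
              _ = a := hra
          have hEH : G.IsEdgeHalf a := ⟨hhalf, hfix⟩
          by_cases h1 : G.rt a ∈ S <;> by_cases h2 : G.rt (G.inv a) ∈ S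
          · left; simp [h1, h2]
          · right
            exact ⟨G.inv a, edgeHalf_inv hEH, h2, by rw [G.inv_invol]; exact h1⟩
          · right; exact ⟨a, hEH, h1, h2⟩
          · left; simp [h1, h2]
    | refl a => left; exact Iff.rfl
    | symm a b _ ih =>
      rcases ih with h | h
      · left; exact h.symm
      · right; exact h
    | trans a b c _ _ ih1 ih2 =>
      rcases ih1 with h1 | h1
      · rcases ih2 with h2 | h2
        · left; exact h1.trans h2
        · right; exact h2
      · right; exact h1
  rcases key w v (hG.2 w v) with hiff | hb
  · rw [show G.rt w = w from hwV, show G.rt v = v from hvV] at hiff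
    exact absurd (hiff.mpr hvS) hwS
  · exact hb

lemma exists_forest (G : PGraph) (hG : G.Connected) :
    ∀ (n : ℕ) (S : Finset G.X), (∀ x ∈ S, G.IsVertex x) → S.Nonempty →
      (G.vertexSet \ S).card = n →
      ∃ H : Finset G.X, H ⊆ G.edgeHalfSet ∧
        (∀ x ∈ H, G.rt x ∉ S ∨ G.rt (G.inv x) ∉ S) ∧ H.card = 2 * n := by
  classical
  intro n
  induction n with
  | zero =>
    intro S _ _ _
    exact ⟨∅, by simp, by simp, by simp⟩
  | succ n ih =>
    intro S hSV hSne hcard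
    obtain ⟨v, hvS⟩ := hSne
    have hne : (G.vertexSet \ S).Nonempty := by
      rw [← Finset.card_pos, hcard]; omega
    obtain ⟨w, hw⟩ := hne
    rw [Finset.mem_sdiff] at hw
    obtain ⟨h, hEH, hout, hin⟩ := exists_boundary G hG S v hvS (hSV v hvS)
      w (mem_vertexSet.mp hw.1) hw.2
    have hrtV : G.IsVertex (G.rt h) := G.rt_idem h
    set S' := insert (G.rt h) S with hS'
    have hSV' : ∀ x ∈ S', G.IsVertex x := by
      intro x hx
      rcases Finset.mem_insert.mp hx with rfl | hx
      · exact hrtV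
      · exact hSV x hx
    have hcard' : (G.vertexSet \ S').card = n := by
      have hEq : G.vertexSet \ S' = (G.vertexSet \ S).erase (G.rt h) := by
        rw [hS']
        ext y
        simp only [Finset.mem_sdiff, Finset.mem_erase, Finset.mem_insert]
        tauto
      rw [hEq, Finset.card_erase_of_mem
        (Finset.mem_sdiff.mpr ⟨mem_vertexSet.mpr hrtV, hout⟩), hcard]
      omega
    obtain ⟨H', hsub', hbd', hc'⟩ := ih S' hSV' ⟨v, Finset.mem_insert_of_mem hvS⟩ hcard'
    have hSS' : S ⊆ S' := Finset.subset_insert _ _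
    have hhne : h ∉ H' := by
      intro hmem
      rcases hbd' h hmem with hx | hx
      · exact hx (Finset.mem_insert_self _ _)
      · exact hx (Finset.mem_insert_of_mem hin)
    have hine : G.inv h ∉ H' := by
      intro hmem
      rcases hbd' _ hmem with hx | hx
      · exact hx (Finset.mem_insert_of_mem hin)
      · rw [G.inv_invol] at hx
        exact hx (Finset.mem_insert_self _ _)
    have hneq : h ≠ G.inv h := fun e => hEH.2 e.symm
    refine ⟨insert h (insert (G.inv h) H'), ?_, ?_, ?_⟩
    · intro x hx
      rcases Finset.mem_insert.mp hx with rfl | hx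
      · exact mem_edgeHalfSet.mpr hEH
      rcases Finset.mem_insert.mp hx with rfl | hx
      · exact mem_edgeHalfSet.mpr (edgeHalf_inv hEH)
      · exact hsub' hx
    · intro x hx
      rcases Finset.mem_insert.mp hx with rfl | hx
      · left; exact hout
      rcases Finset.mem_insert.mp hx with rfl | hx
      · right; rw [G.inv_invol]; exact hout
      · rcases hbd' x hx with hx' | hx'
        · left; exact fun c => hx' (hSS' c)
        · right; exact fun c => hx' (hSS' c)
    · rw [Finset.card_insert_of_notMem, Finset.card_insert_of_notMem hine, hc']
      · ring
      · simp only [Finset.mem_insert]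
        push_neg
        exact ⟨hneq, hhne⟩

lemma connected_bound (G : PGraph) (hG : G.Connected) :
    G.numVertices ≤ G.numEdges + 1 := by
  classical
  obtain ⟨x⟩ := hG.1
  have hx : G.IsVertex (G.rt x) := G.rt_idem x
  have hmem : G.rt x ∈ G.vertexSet := mem_vertexSet.mpr hx
  obtain ⟨H, hsub, -, hc⟩ := exists_forest G hG (G.vertexSet \ {G.rt x}).card {G.rt x}
    (by intro y hy; rw [Finset.mem_singleton] at hy; subst hy; exact hx)
    ⟨_, Finset.mem_singleton_self _⟩ rfl
  have h1 : H.card ≤ G.edgeHalfSet.card := Finset.card_le_card hsub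
  have h2 : (G.vertexSet \ {G.rt x}).card = G.numVertices - 1 := by
    rw [Finset.card_sdiff_of_subset (by simpa using hmem)]
    simp [PGraph.numVertices]
  have h3 : 1 ≤ G.numVertices := Finset.card_pos.mpr ⟨_, hmem⟩
  have h4 : G.numVertices - 1 ≤ G.numEdges := by
    unfold PGraph.numEdges
    rw [Nat.le_div_iff_mul_le (by norm_num)]
    omega
  omega

lemma tree_facts (T : WGraph) (hT : IsTree T) :
    (∀ v ∈ T.toPGraph.vertexSet, T.gw v = 0) ∧
      (T.toPGraph.numEdges : ℤ) = (T.toPGraph.numVertices : ℤ) - 1 := by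
  obtain ⟨hconn, hgen⟩ := hT
  have hb := connected_bound _ hconn
  unfold WGraph.genus at hgen
  have hnn : ∀ v ∈ T.toPGraph.vertexSet, (0:ℤ) ≤ (T.gw v : ℤ) :=
    fun v _ => Int.natCast_nonneg _
  have hb' : (T.toPGraph.numVertices : ℤ) ≤ (T.toPGraph.numEdges : ℤ) + 1 := by
    exact_mod_cast hb
  have hsum0 : ∑ v ∈ T.toPGraph.vertexSet, (T.gw v : ℤ) = 0 := by
    have hge : (0:ℤ) ≤ ∑ v ∈ T.toPGraph.vertexSet, (T.gw v : ℤ) :=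
      Finset.sum_nonneg hnn
    linarith
  constructor
  · intro v hv
    have := (Finset.sum_eq_zero_iff_of_nonneg hnn).mp hsum0 v hv
    exact_mod_cast this
  · linarith

section Harm

variable {Gp Tp : PGraph} (φ : HarmonicHom Gp Tp)

lemma half_image (hfin : φ.Finite) {h : Gp.X} (hh : Gp.IsHalf h) :
    Tp.IsHalf (φ.toFun h) := by
  intro hv
  have h0 : φ.deg h = 0 := (φ.deg_zero_iff h hh).mpr hv
  have := hfin h hh
  omega

lemma vertex_image {v : Gp.X} (hv : Gp.IsVertex v) : Tp.IsVertex (φ.toFun v) := by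
  have h := φ.map_rt v
  rw [show Gp.rt v = v from hv] at h
  exact h.symm

lemma tangent_image (hfin : φ.Finite) {v h' : Gp.X} (hv : Gp.IsVertex v)
    (hh : h' ∈ Gp.tangents v) : φ.toFun h' ∈ Tp.tangents (φ.toFun v) := by
  rw [mem_tangents] at hh ⊢
  refine ⟨half_image φ hfin hh.1, ?_⟩
  rw [← φ.map_rt, hh.2]

lemma val_count (hfin : φ.Finite) {v : Gp.X} (hv : Gp.IsVertex v) :
    Gp.valence v = ∑ h ∈ Tp.tangents (φ.toFun v),
      (cfilter (fun h' => φ.toFun h' = h) (Gp.tangents v)).card := by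
  classical
  simp only [cfilter_eq_filter]
  exact Finset.card_eq_sum_card_fiberwise (fun x hx => tangent_image φ hfin hv hx)

lemma sum_one_card {s : Finset α} {f : α → ℕ} (hpos : ∀ x ∈ s, 1 ≤ f x)
    (hsum : ∑ x ∈ s, f x = 1) : s.card = 1 := by
  have hle : s.card ≤ 1 := by
    calc s.card = ∑ _x ∈ s, 1 := by rw [Finset.card_eq_sum_ones]
      _ ≤ ∑ x ∈ s, f x := Finset.sum_le_sum hpos
      _ = 1 := hsum
  have hpos' : 0 < s.card := by
    rcases s.eq_empty_or_nonempty with rfl | hne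
    · simp at hsum
    · exact Finset.card_pos.mpr hne
  omega

lemma sum_two_card [DecidableEq α] {s : Finset α} {f : α → ℕ} [DecidablePred (fun x => f x = 2)]
    (hpos : ∀ x ∈ s, 1 ≤ f x) (hsum : ∑ x ∈ s, f x = 2) :
    s.card + (s.filter (fun x => f x = 2)).card = 2 := by
  have hle : s.card ≤ 2 := by
    calc s.card = ∑ _x ∈ s, 1 := by rw [Finset.card_eq_sum_ones]
      _ ≤ ∑ x ∈ s, f x := Finset.sum_le_sum hpos
      _ = 2 := hsum
  rcases Nat.lt_or_ge s.card 2 with hlt | hge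
  · rcases Nat.lt_or_ge s.card 1 with h0 | h1
    · have : s = ∅ := Finset.card_eq_zero.mp (by omega)
      subst this
      simp at hsum
    · have hc : s.card = 1 := by omega
      obtain ⟨a, rfl⟩ := Finset.card_eq_one.mp hc
      rw [Finset.sum_singleton] at hsum
      rw [Finset.filter_singleton]
      simp [hsum]
  · have hc : s.card = 2 := le_antisymm hle hge
    obtain ⟨a, b, hab, hs⟩ := Finset.card_eq_two.mp hc
    rw [hs] at hsum ⊢
    rw [Finset.sum_pair hab] at hsum
    have ha := hpos a (by rw [hs]; simp)
    have hb := hpos b (by rw [hs]; simp)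
    have hfa : f a = 1 := by omega
    have hfb : f b = 1 := by omega
    have hfe : ({a, b} : Finset α).filter (fun x => f x = 2) = ∅ := by
      rw [Finset.filter_insert, Finset.filter_singleton]
      simp [hfa, hfb]
    rw [hfe]
    simp [Finset.card_pair hab]

lemma deg_one_val (hfin : φ.Finite) {v : Gp.X} (hv : Gp.IsVertex v) (hd : φ.deg v = 1) :
    Gp.valence v = Tp.valence (φ.toFun v) := by
  classical
  rw [val_count φ hfin hv]
  have hcong : ∀ h ∈ Tp.tangents (φ.toFun v),
      (cfilter (fun h' => φ.toFun h' = h) (Gp.tangents v)).card = 1 := by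
    intro h hh
    rw [mem_tangents] at hh
    have hsum : ∑ h' ∈ cfilter (fun h' => φ.toFun h' = h) (Gp.tangents v), φ.deg h' = 1 := by
      rw [← hd]
      exact (φ.harmonic v hv h hh.1 hh.2).symm
    exact sum_one_card
      (fun x hx => hfin x (mem_tangents.mp (mem_cfilter.mp hx).1).1) hsum
  rw [Finset.sum_congr rfl hcong, ← Finset.card_eq_sum_ones]
  rfl

lemma deg_two_val (hfin : φ.Finite) {v : Gp.X} (hv : Gp.IsVertex v) (hd : φ.deg v = 2) :
    Gp.valence v + Gp.valIn (cfilter (fun y => φ.deg y = 2) Finset.univ) v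
      = 2 * Tp.valence (φ.toFun v) := by
  classical
  have hvalIn : Gp.valIn (cfilter (fun y => φ.deg y = 2) Finset.univ) v
      = ∑ h ∈ Tp.tangents (φ.toFun v),
          (((Gp.tangents v).filter (fun h' => φ.toFun h' = h)).filter
            (fun y => φ.deg y = 2)).card := by
    unfold PGraph.valIn
    have h1 : Gp.tangents v ∩ cfilter (fun y => φ.deg y = 2) Finset.univ
        = (Gp.tangents v).filter (fun y => φ.deg y = 2) := by
      ext x
      rw [Finset.mem_inter, mem_cfilter, Finset.mem_filter]
      simp
    rw [h1, Finset.card_eq_sum_card_fiberwise (f := φ.toFun)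
      (t := Tp.tangents (φ.toFun v))
      (fun x hx => tangent_image φ hfin hv (Finset.mem_filter.mp hx).1)]
    apply Finset.sum_congr rfl
    intro h _
    congr 1
    ext x
    simp only [Finset.mem_filter]
    tauto
  rw [val_count φ hfin hv, hvalIn, ← Finset.sum_add_distrib]
  have hcong : ∀ h ∈ Tp.tangents (φ.toFun v),
      (cfilter (fun h' => φ.toFun h' = h) (Gp.tangents v)).card +
        (((Gp.tangents v).filter (fun h' => φ.toFun h' = h)).filter
          (fun y => φ.deg y = 2)).card = 2 := by
    intro h hh
    rw [mem_tangents] at hh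
    have hsum : ∑ h' ∈ cfilter (fun h' => φ.toFun h' = h) (Gp.tangents v), φ.deg h' = 2 := by
      rw [← hd]
      exact (φ.harmonic v hv h hh.1 hh.2).symm
    rw [cfilter_eq_filter] at hsum ⊢
    exact sum_two_card
      (fun x hx => hfin x (mem_tangents.mp (Finset.mem_filter.mp hx).1).1) hsum
  rw [Finset.sum_congr rfl hcong, Finset.sum_const, smul_eq_mul]
  unfold PGraph.valence
  ring

end Harm

end Helpers

/-- Let `φ : (G,g) → T` be a hyperelliptic morphism with `G` connected,
and let `C'_φ = { x' ∈ X(G) : d_φ(x') = 2 }` be the dilation subgraph in `G`.  Then for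
every vertex `v'` of `G`: if `d_φ(v') = 1` then `Ram_φ(v') = 0`, and if `d_φ(v') = 2` then
`Ram_φ(v') = 2g(v') + 2 − val_{C'_φ}(v')`.  If moreover `G` and `T` have no legs, then the
total ramification is `2·genus(G) + 2`. -/
theorem hyperelliptic_ramification_divisor
    (G T : WGraph) (hG : G.toPGraph.Connected)
    (φ : HarmonicHom G.toPGraph T.toPGraph) (hφ : IsHyperelliptic φ) :
    (∀ v', G.toPGraph.IsVertex v' →
      (φ.deg v' = 1 → ram φ v' = 0) ∧
      (φ.deg v' = 2 → ram φ v' =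
        2 * (G.gw v' : ℤ) + 2 -
          (G.toPGraph.valIn (cfilter (fun y => φ.deg y = 2) Finset.univ) v' : ℤ))) ∧
    (G.toPGraph.numLegs = 0 → T.toPGraph.numLegs = 0 →
      ∑ v' ∈ G.toPGraph.vertexSet, ram φ v' = 2 * G.genus + 2) := by
  classical
  obtain ⟨hfin, hTtree, hfib, hwt⟩ := hφ
  obtain ⟨hgw0, hET⟩ := tree_facts T hTtree
  constructor
  · intro v' hv'
    have hw : T.toPGraph.IsVertex (φ.toFun v') := vertex_image φ hv'
    have hgwT : T.gw (φ.toFun v') = 0 := hgw0 _ (mem_vertexSet.mpr hw)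
    constructor
    · intro hd1
      have hval : G.toPGraph.valence v' = T.toPGraph.valence (φ.toFun v') :=
        deg_one_val φ hfin hv' hd1
      have hg0 : G.gw v' = 0 := by
        by_contra hcon
        have := hwt v' hv' (Nat.pos_of_ne_zero hcon)
        omega
      unfold ram WGraph.chiV
      rw [hd1, hgwT, hg0, hval]
      push_cast
      ring
    · intro hd2
      have hval := deg_two_val φ hfin hv' hd2
      have hvalz : (G.toPGraph.valence v' : ℤ) +
          (G.toPGraph.valIn (cfilter (fun y => φ.deg y = 2) Finset.univ) v' : ℤ)
          = 2 * (T.toPGraph.valence (φ.toFun v') : ℤ) := by exact_mod_cast hval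
      unfold ram WGraph.chiV
      rw [hd2, hgwT]
      push_cast
      linarith
  · intro hLG hLT
    have hvalG : (∑ v ∈ G.toPGraph.vertexSet, (G.toPGraph.valence v : ℤ))
        = 2 * (G.toPGraph.numEdges : ℤ) := by
      have h := sum_valence_eq G.toPGraph
      rw [show G.toPGraph.legSet.card = 0 from hLG, card_edgeHalf, Nat.add_zero] at h
      exact_mod_cast congrArg (Nat.cast : ℕ → ℤ) h
    have hvalT : (∑ v ∈ T.toPGraph.vertexSet, (T.toPGraph.valence v : ℤ))
        = 2 * (T.toPGraph.numEdges : ℤ) := by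
      have h := sum_valence_eq T.toPGraph
      rw [show T.toPGraph.legSet.card = 0 from hLT, card_edgeHalf, Nat.add_zero] at h
      exact_mod_cast congrArg (Nat.cast : ℕ → ℤ) h
    have hchiT : ∑ w ∈ T.toPGraph.vertexSet, T.chiV w = 2 := by
      have h0 : ∀ w ∈ T.toPGraph.vertexSet, T.chiV w = 2 - (T.toPGraph.valence w : ℤ) := by
        intro w hw
        unfold WGraph.chiV
        rw [hgw0 w hw]
        push_cast
        ring
      rw [Finset.sum_congr rfl h0, Finset.sum_sub_distrib, Finset.sum_const, hvalT,
        nsmul_eq_mul, show T.toPGraph.vertexSet.card = T.toPGraph.numVertices from rfl]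
      linarith
    have hmaps : ∀ v' ∈ G.toPGraph.vertexSet, φ.toFun v' ∈ T.toPGraph.vertexSet :=
      fun v' hv' => mem_vertexSet.mpr (vertex_image φ (mem_vertexSet.mp hv'))
    have hB : ∑ v' ∈ G.toPGraph.vertexSet, (φ.deg v' : ℤ) * T.chiV (φ.toFun v') = 4 := by
      rw [← Finset.sum_fiberwise_of_maps_to hmaps
        (fun v' => (φ.deg v' : ℤ) * T.chiV (φ.toFun v'))]
      have hinner : ∀ w ∈ T.toPGraph.vertexSet,
          ∑ v' ∈ G.toPGraph.vertexSet.filter (fun v' => φ.toFun v' = w),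
            (φ.deg v' : ℤ) * T.chiV (φ.toFun v') = 2 * T.chiV w := by
        intro w hw
        have hstep : ∀ v' ∈ G.toPGraph.vertexSet.filter (fun v' => φ.toFun v' = w),
            (φ.deg v' : ℤ) * T.chiV (φ.toFun v') = T.chiV w * (φ.deg v' : ℤ) := by
          intro v' hv'
          rw [(Finset.mem_filter.mp hv').2, mul_comm]
        rw [Finset.sum_congr rfl hstep, ← Finset.mul_sum]
        have hfd2 : ∑ v' ∈ G.toPGraph.vertexSet.filter (fun v' => φ.toFun v' = w),
            φ.deg v' = 2 := by
          rw [← hfib w (mem_vertexSet.mp hw)]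
          unfold HarmonicHom.vertexFiberDeg
          apply Finset.sum_congr _ (fun _ _ => rfl)
          ext x
          rw [Finset.mem_filter, mem_cfilter]
        have hfd3 : ∑ v' ∈ G.toPGraph.vertexSet.filter (fun v' => φ.toFun v' = w),
            (φ.deg v' : ℤ) = 2 := by
          exact_mod_cast congrArg (Nat.cast : ℕ → ℤ) hfd2
        rw [hfd3]
        ring
      rw [Finset.sum_congr rfl hinner, ← Finset.mul_sum, hchiT]
      ring
    have hsplit : ∑ v' ∈ G.toPGraph.vertexSet, ram φ v'
        = (∑ v' ∈ G.toPGraph.vertexSet, (φ.deg v' : ℤ) * T.chiV (φ.toFun v'))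
          - ∑ v' ∈ G.toPGraph.vertexSet, G.chiV v' := by
      rw [← Finset.sum_sub_distrib]
      exact Finset.sum_congr rfl (fun v' _ => rfl)
    have hchiG : ∑ v' ∈ G.toPGraph.vertexSet, G.chiV v'
        = 2 * (G.toPGraph.numVertices : ℤ)
          - 2 * (∑ v ∈ G.toPGraph.vertexSet, (G.gw v : ℤ))
          - 2 * (G.toPGraph.numEdges : ℤ) := by
      unfold WGraph.chiV
      rw [Finset.sum_sub_distrib, Finset.sum_sub_distrib, hvalG, Finset.sum_const,
        nsmul_eq_mul, ← Finset.mul_sum,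
        show G.toPGraph.vertexSet.card = G.toPGraph.numVertices from rfl]
      ring
    rw [hsplit, hB, hchiG]
    unfold WGraph.genus
    ring


end TropDR
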